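/- Let p be a subharmonic projection for a quantum Markov semigroup T. Then p T_t(p x p) p = p T_t(x) p for all x ∈ B(H), t ≥ 0, and consequently T_t^p(x) := p T_t(x) p defines a semigroup of unital completely positive maps on p B(H) p. -/

import Mathlib

open ContinuousLinearMap
open scoped InnerProductSpace

variable {H : Type} [NormedAddCommGroup H] [InnerProductSpace ℂ H] [CompleteSpace H]

lemma aux_eq_zero_of_pos_neg {A : H →L[ℂ] H} (h1 : A.IsPositive)
    (h2 : (-A).IsPositive) : A = 0 := by
  rw [ContinuousLinearMap.isPositive_iff_complex] at h1 h2
  have hz : ∀ x : H, ⟪A x, x⟫_ℂ = 0 := by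
    intro x
    obtain ⟨hre, hge⟩ := h1 x
    obtain ⟨_, hge'⟩ := h2 x
    simp only [RCLike.re_to_complex] at hre hge hge'
    simp only [ContinuousLinearMap.neg_apply, inner_neg_left, Complex.neg_re] at hge'
    have h0 : (⟪A x, x⟫_ℂ).re = 0 := le_antisymm (by linarith) hge
    rw [← hre, h0, Complex.ofReal_zero]
  have := (inner_map_self_eq_zero (A : H →ₗ[ℂ] H)).mp hz
  exact ContinuousLinearMap.coe_injective (by rw [this, ContinuousLinearMap.coe_zero])

lemma aux_conj {A : H →L[ℂ] H} (hA : A.IsPositive) (b : H →L[ℂ] H) :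
    (star b * A * b).IsPositive := by
  have h := hA.adjoint_conj b
  rw [ContinuousLinearMap.star_eq_adjoint, mul_assoc]
  exact h

lemma aux_linear {A B : H →L[ℂ] H} (hA : IsSelfAdjoint A)
    (h : ∀ t : ℝ, ((t : ℂ) • A + B).IsPositive) : A = 0 := by
  have hsym := (ContinuousLinearMap.isSelfAdjoint_iff_isSymmetric).mp hA
  have hz : ∀ x : H, ⟪A x, x⟫_ℂ = 0 := by
    intro x
    have hre : ∀ t : ℝ, 0 ≤ t * (⟪A x, x⟫_ℂ).re + (⟪B x, x⟫_ℂ).re := by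
      intro t
      have h2 := (h t).inner_nonneg_left x
      simp only [RCLike.re_to_complex, ContinuousLinearMap.add_apply,
        ContinuousLinearMap.smul_apply, inner_add_left, inner_smul_left,
        Complex.conj_ofReal, Complex.add_re, Complex.re_ofReal_mul] at h2
      simpa [Complex.add_re, Complex.re_ofReal_mul] using (Complex.le_def.mp h2).1
    have h0 : (⟪A x, x⟫_ℂ).re = 0 := by
      by_contra hne
      have h1 := hre ((-(⟪B x, x⟫_ℂ).re - 1) / (⟪A x, x⟫_ℂ).re)
      rw [div_mul_cancel₀ _ hne] at h1
      linarith
    have hreal : (starRingEnd ℂ) ⟪A x, x⟫_ℂ = ⟪A x, x⟫_ℂ := by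
      rw [inner_conj_symm]
      exact (hsym x x).symm
    rw [← Complex.conj_eq_iff_re.mp hreal, h0, Complex.ofReal_zero]
  have := (inner_map_self_eq_zero (A : H →ₗ[ℂ] H)).mp hz
  exact ContinuousLinearMap.coe_injective (by rw [this, ContinuousLinearMap.coe_zero])

/-- Complete positivity of a linear map on `B(H)`. -/
def IsCompletelyPositive {H : Type} [NormedAddCommGroup H] [InnerProductSpace ℂ H]
    [CompleteSpace H] (T : (H →L[ℂ] H) →ₗ[ℂ] (H →L[ℂ] H)) : Prop :=
  ∀ (n : ℕ) (a b : Fin n → (H →L[ℂ] H)),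
    (∑ i, ∑ j, star (b i) * T (star (a i) * a j) * b j).IsPositive

/-- for a subharmonic projection `p`,
`p T_t(p x p) p = p T_t(x) p` for all `x`, `t ≥ 0`, so that
`T^p_t(x) := p T_t(x) p` defines a semigroup of unital completely positive maps
on the corner algebra `p B(H) p`. -/
theorem reduced_semigroup_of_subharmonic_projection
    {H : Type} [NormedAddCommGroup H] [InnerProductSpace ℂ H] [CompleteSpace H]
    (T : ℝ → (H →L[ℂ] H) →ₗ[ℂ] (H →L[ℂ] H))
    (hCP : ∀ t, 0 ≤ t → IsCompletelyPositive (T t))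
    (hunital : ∀ t, 0 ≤ t → T t 1 = 1)
    (hzero : T 0 = LinearMap.id)
    (hsemi : ∀ t s, 0 ≤ t → 0 ≤ s → ∀ x, T (t + s) x = T t (T s x))
    (p : H →L[ℂ] H) (hp : IsSelfAdjoint p ∧ p * p = p)
    (hsub : ∀ t, 0 ≤ t → (T t p - p).IsPositive)
    (Tp : ℝ → (H →L[ℂ] H) →ₗ[ℂ] (H →L[ℂ] H))
    (hTp : ∀ t x, Tp t x = p * T t x * p) :
    (∀ t, 0 ≤ t → ∀ x, Tp t (p * x * p) = Tp t x) ∧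
    (∀ t s, 0 ≤ t → 0 ≤ s → ∀ x, Tp (t + s) x = Tp t (Tp s x)) ∧
    (∀ t, 0 ≤ t → Tp t p = p) ∧
    (∀ t, 0 ≤ t → IsCompletelyPositive (Tp t)) := by
  obtain ⟨hpsa, hpp⟩ := hp
  have hpsa' : star p = p := hpsa
  set q : H →L[ℂ] H := 1 - p with hq_def
  have hq_sa : star q = q := by
    rw [hq_def, star_sub, hpsa']; simp
  have hqq : q * q = q := by
    rw [hq_def]
    have : (1 - p) * (1 - p) = 1 - p - (p - p * p) := by noncomm_ring
    rw [this, hpp]; abel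
  -- Main pointwise facts for each fixed time t ≥ 0
  have main : ∀ t, 0 ≤ t →
      (p * T t p * p = p) ∧ (∀ x, p * T t (p * x * p) * p = p * T t x * p) := by
    intro t ht
    -- Step A : p T_t(q) p = 0
    have hTq_pos : (T t q).IsPositive := by
      have h := hCP t ht 1 ![q] ![1]
      simpa [Fin.sum_univ_one, hq_sa, hqq] using h
    have hpTqp_pos : (p * T t q * p).IsPositive := by
      have := aux_conj hTq_pos p
      rwa [hpsa'] at this
    have e1 : p * T t q * p = p - p * T t p * p := by
      rw [hq_def, map_sub, hunital t ht]
      simp [mul_sub, sub_mul, hpp]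
    have hneg : (-(p * T t q * p)).IsPositive := by
      have hconj : (p * (T t p - p) * p).IsPositive := by
        have := aux_conj (hsub t ht) p
        rwa [hpsa'] at this
      have e2 : p * (T t p - p) * p = -(p * T t q * p) := by
        rw [e1]
        have : p * (T t p - p) * p = p * T t p * p - p * p * p := by noncomm_ring
        rw [this, hpp, hpp]; abel
      rwa [e2] at hconj
    have hA : p * T t q * p = 0 := aux_eq_zero_of_pos_neg hpTqp_pos hneg
    have hunit_p : p * T t p * p = p := by
      have := e1.symm.trans hA
      -- this : p - p * T t p * p = 0
      linear_combination (norm := abel) -this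
    -- Step B : p T_t(q x) p = 0 and p T_t(x q) p = 0
    have hM : ∀ x : H →L[ℂ] H,
        p * T t (q * x) * p = 0 ∧ p * T t (star x * q) * p = 0 := by
      intro x
      set M : H →L[ℂ] H := p * T t (q * x) * p with hM_def
      set N : H →L[ℂ] H := p * T t (star x * q) * p with hN_def
      set B : H →L[ℂ] H := p * T t (star x * x) * p with hB_def
      have key : ∀ c : ℂ, ((starRingEnd ℂ) c • M + (c • N + B)).IsPositive := by
        intro c
        have h := hCP t ht 2 ![q, x] ![c • p, p]
        have expand :
            (∑ i, ∑ j, star ((![c • p, p]) i) *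
              T t (star ((![q, x]) i) * (![q, x]) j) * (![c • p, p]) j)
            = (starRingEnd ℂ) c • M + (c • N + B) := by
          simp only [Fin.sum_univ_two, Matrix.cons_val_zero, Matrix.cons_val_one,
            Matrix.head_cons, star_smul, hpsa', hq_sa, hqq, smul_mul_assoc,
            mul_smul_comm, hM_def, hN_def, hB_def]
          rw [hA]
          simp
        rwa [expand] at h
      -- M + N = 0
      have hMN_sa : IsSelfAdjoint (M + N) := by
        have h1 := (key 1).1
        have h0 := (key 0).1
        simp only [map_one, one_smul, map_zero, zero_smul, zero_add] at h1 h0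
        have e : M + N = (M + (N + B)) - B := by abel
        rw [e]
        rw [ContinuousLinearMap.isSelfAdjoint_iff_isSymmetric, ContinuousLinearMap.coe_sub]
        exact h1.sub h0
      have hMN : M + N = 0 := by
        apply aux_linear hMN_sa (B := B)
        intro t'
        have h := key (t' : ℂ)
        rwa [Complex.conj_ofReal, smul_add, add_assoc] at *
      -- I • (N - M) = 0
      have hNM_sa : IsSelfAdjoint (Complex.I • (N - M)) := by
        have h1 := (key Complex.I).1
        have h0 := (key 0).1
        simp only [Complex.conj_I, map_zero, zero_smul, zero_add] at h1 h0
        have e : Complex.I • (N - M) = ((-Complex.I) • M + (Complex.I • N + B)) - B := by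
          rw [smul_sub, neg_smul]; abel
        rw [e]
        rw [ContinuousLinearMap.isSelfAdjoint_iff_isSymmetric, ContinuousLinearMap.coe_sub]
        exact h1.sub h0
      have hNM : Complex.I • (N - M) = 0 := by
        apply aux_linear hNM_sa (B := B)
        intro t'
        have h := key ((t' : ℂ) * Complex.I)
        rw [map_mul, Complex.conj_ofReal, Complex.conj_I, mul_neg] at h
        have e : (t' : ℂ) • (Complex.I • (N - M)) + B
            = (-((t' : ℂ) * Complex.I)) • M + (((t' : ℂ) * Complex.I) • N + B) := by
          rw [smul_smul, smul_sub, neg_smul]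
          abel
        rwa [e]
      have hNMeq : N = M := by
        have := (smul_eq_zero.mp hNM).resolve_left Complex.I_ne_zero
        have := sub_eq_zero.mp this
        exact this
      have hM0 : M = 0 := by
        rw [hNMeq] at hMN
        have h2 : (2 : ℂ) • M = 0 := by rw [two_smul]; exact hMN
        have := (smul_eq_zero.mp h2).resolve_left (by norm_num)
        exact this
      exact ⟨hM0, hNMeq ▸ hM0⟩
    have hleft : ∀ x : H →L[ℂ] H, p * T t (q * x) * p = 0 := fun x => (hM x).1
    have hright : ∀ x : H →L[ℂ] H, p * T t (x * q) * p = 0 := by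
      intro x
      have := (hM (star x)).2
      rwa [star_star] at this
    -- Step C : corner identity
    have corner : ∀ x : H →L[ℂ] H, p * T t (p * x * p) * p = p * T t x * p := by
      intro x
      have hx : x = p * x * p + (p * x) * q + q * (x * p) + q * (x * q) := by
        rw [hq_def]; noncomm_ring
      calc p * T t (p * x * p) * p
          = p * T t (p * x * p) * p + (p * T t ((p * x) * q) * p
            + (p * T t (q * (x * p)) * p + p * T t (q * (x * q)) * p)) := by
            rw [hright (p * x), hleft (x * p), hleft (x * q)]; abel
        _ = p * T t (p * x * p + ((p * x) * q + (q * (x * p) + q * (x * q)))) * p := by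
            simp only [map_add, mul_add, add_mul]
        _ = p * T t x * p := by rw [← add_assoc, ← add_assoc, ← hx]
    exact ⟨hunit_p, corner⟩
  refine ⟨?_, ?_, ?_, ?_⟩
  · intro t ht x
    rw [hTp, hTp, (main t ht).2 x]
  · intro t s ht hs x
    rw [hTp, hTp, hTp, hsemi t s ht hs, ← (main t ht).2 (T s x)]
  · intro t ht
    rw [hTp]
    exact (main t ht).1
  · intro t ht n a b
    have h := hCP t ht n a (fun i => p * b i)
    have e : (∑ i, ∑ j, star (b i) * Tp t (star (a i) * a j) * b j)
        = ∑ i, ∑ j, star (p * b i) * T t (star (a i) * a j) * (p * b j) := by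
      refine Finset.sum_congr rfl fun i _ => Finset.sum_congr rfl fun j _ => ?_
      rw [hTp, star_mul, hpsa']
      noncomm_ring
    rw [e]
    exact h
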